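/- Let d ≥ 1, m = 2d, and r, t ∈ ℂ satisfy the unitarity constraints |r|² + (m−1)|t|² = 1 and (m−2)|t|² + conj(r)·t + r·conj(t) = 0. Define the dispersion 𝒟(n) = K·Σ_{a∈(Fin m)^n} ‖e(a_1)+⋯+e(a_n)‖²·|Ξ(a)|² and R(n) = Σ_{a∈(Fin m)^n} |Ξ(a)|² · ⟨e(a_1)+⋯+e(a_n), e(a_n)⟩. Then for every n ≥ 1, 𝒟(n+1) = 𝒟(n) + 1 + 2K·(|r|² − |t|²)·R(n), where K = |(r−t)/√m + √m·t|². -/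

import Mathlib

noncomputable section

open scoped BigOperators ComplexConjugate RealInnerProductSpace

/-- `Ξ(a_1, …, a_n) = ∏_{j=1}^{n-1} (t + (r - t) δ_{a_j, a_{j+1}})` (empty product is 1). -/
def Xi (m n : ℕ) (r t : ℂ) (a : Fin n → Fin m) : ℂ :=
  ∏ j : Fin n, if h : (j : ℕ) + 1 < n then
    (t + (r - t) * (if a j = a ⟨(j : ℕ) + 1, h⟩ then 1 else 0)) else 1

/-- The `2d` signed standard basis vectors of `ℝ^d`: `e(2k) = u_k`, `e(2k+1) = -u_k`. -/
def eR (d : ℕ) (a : Fin (2 * d)) : EuclideanSpace ℝ (Fin d) :=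
  EuclideanSpace.single ⟨(a : ℕ) / 2, by have := a.2; omega⟩
    (if (a : ℕ) % 2 = 0 then 1 else -1)

/-- The normalization constant `K = |(r-t)/√m + √m t|²` with `m = 2d`. -/
def K (d : ℕ) (r t : ℂ) : ℝ :=
  ‖(r - t) / (Real.sqrt (2 * d) : ℂ) + (Real.sqrt (2 * d) : ℂ) * t‖ ^ 2

/-- The dispersion `𝒟(n) = K Σ_a ‖e(a_1)+⋯+e(a_n)‖² |Ξ(a)|²` of the phase-averaged
quantum walk with random phase shifts. -/
def Dsp (d : ℕ) (r t : ℂ) (n : ℕ) : ℝ :=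
  K d r t * ∑ a : Fin n → Fin (2 * d),
    ‖∑ j : Fin n, eR d (a j)‖ ^ 2 * ‖Xi (2 * d) n r t a‖ ^ 2

/-- The auxiliary sum `R(n) = Σ_a |Ξ(a)|² ⟨e(a_1)+⋯+e(a_n), e(a_n)⟩`. -/
def Rsum (d : ℕ) (r t : ℂ) (n : ℕ) : ℝ :=
  if hn : 0 < n then
    ∑ a : Fin n → Fin (2 * d), ‖Xi (2 * d) n r t a‖ ^ 2 *
      ⟪(∑ j : Fin n, eR d (a j)), eR d (a ⟨n - 1, by omega⟩)⟫
  else 0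

/-! ### Auxiliary lemmas -/

lemma sum_snoc' {M : Type*} [AddCommMonoid M] {m n : ℕ} (F : (Fin (n+1) → Fin m) → M) :
    ∑ a : Fin (n+1) → Fin m, F a
      = ∑ b : Fin n → Fin m, ∑ c : Fin m, F (Fin.snoc b c) := by
  symm
  calc ∑ b : Fin n → Fin m, ∑ c : Fin m, F (Fin.snoc b c)
      = ∑ c : Fin m, ∑ b : Fin n → Fin m, F (Fin.snoc b c) := Finset.sum_comm
    _ = ∑ p : Fin m × (Fin n → Fin m), F (Fin.snoc p.2 p.1) := by
        rw [Fintype.sum_prod_type]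
    _ = ∑ a : Fin (n+1) → Fin m, F a :=
        Fintype.sum_equiv (Fin.snocEquiv (fun _ => Fin m))
          (fun p => F (Fin.snoc p.2 p.1)) F (fun p => by simp [Fin.snocEquiv])

lemma Xi_eq (m n : ℕ) (r t : ℂ) (a : Fin (n+1) → Fin m) :
    Xi m (n+1) r t a
      = ∏ j : Fin n, (t + (r - t) * (if a j.castSucc = a j.succ then 1 else 0)) := by
  rw [Xi, Fin.prod_univ_castSucc]
  rw [dif_neg (by simp)]
  rw [mul_one]
  refine Finset.prod_congr rfl fun j _ => ?_
  rw [dif_pos (by simp [Nat.succ_lt_succ_iff, j.2] : (j.castSucc : ℕ) + 1 < n + 1)]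
  rfl

lemma Xi_snoc (m k : ℕ) (r t : ℂ) (b : Fin (k+1) → Fin m) (c : Fin m) :
    Xi m (k+2) r t (Fin.snoc b c)
      = Xi m (k+1) r t b * (t + (r - t) * (if b (Fin.last k) = c then 1 else 0)) := by
  rw [Xi_eq, Xi_eq, Fin.prod_univ_castSucc]
  congr 1
  · refine Finset.prod_congr rfl fun j _ => ?_
    rw [show (j.castSucc.succ : Fin (k+2)) = (j.succ).castSucc from by
      simp [Fin.ext_iff], Fin.snoc_castSucc, Fin.snoc_castSucc]
  · rw [show ((Fin.last k).succ : Fin (k+2)) = Fin.last (k+1) from by simp [Fin.ext_iff],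
      Fin.snoc_castSucc, Fin.snoc_last]

lemma Xi_one (m : ℕ) (r t : ℂ) (a : Fin 1 → Fin m) : Xi m 1 r t a = 1 := by
  rw [Xi_eq]; exact Finset.prod_of_isEmpty _

lemma norm_eR (d : ℕ) (a : Fin (2*d)) : ‖eR d a‖ = 1 := by
  rw [eR, EuclideanSpace.norm_single]
  split <;> simp

lemma sum_eR (d : ℕ) : ∑ a : Fin (2*d), eR d a = 0 := by
  refine Finset.sum_ninvolution
    (fun a => ⟨if (a : ℕ) % 2 = 0 then (a:ℕ)+1 else (a:ℕ)-1, by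
      have := a.2; split <;> omega⟩)
    (fun a => ?_) (fun a _ => ?_) (fun a => Finset.mem_univ _) (fun a => ?_)
  · by_cases h : (a : ℕ) % 2 = 0
    · ext j
      simp only [eR, h, if_true, if_pos, PiLp.add_apply, PiLp.zero_apply,
        EuclideanSpace.single_apply]
      have h2 : ((a:ℕ)+1) % 2 ≠ 0 := by omega
      have h3 : ((a:ℕ)+1) / 2 = (a:ℕ)/2 := by omega
      simp [h2, h3]
      split <;> simp
    · ext j
      simp only [eR, h, if_false, PiLp.add_apply, PiLp.zero_apply,
        EuclideanSpace.single_apply]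
      have h2 : ((a:ℕ)-1) % 2 = 0 := by omega
      have h3 : ((a:ℕ)-1) / 2 = (a:ℕ)/2 := by omega
      simp [h2, h3]
      split <;> simp
  · simp only [ne_eq, Fin.ext_iff]
    split <;> omega
  · simp only [Fin.ext_iff]
    split <;> split <;> omega

lemma norm_factor (r t : ℂ) (P : Prop) [Decidable P] :
    ‖t + (r - t) * (if P then 1 else 0)‖^2 = if P then ‖r‖^2 else ‖t‖^2 := by
  split
  · rw [mul_one, show t + (r - t) = r from by ring]
  · rw [mul_zero, add_zero]

lemma sum_if_const {m : ℕ} (x : Fin m) (A B : ℝ) :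
    ∑ c : Fin m, (if x = c then A else B) = A + ((m:ℝ) - 1) * B := by
  have : ∀ c : Fin m, (if x = c then A else B) = B + (if x = c then A - B else 0) := by
    intro c; split <;> ring
  rw [Finset.sum_congr rfl fun c _ => this c, Finset.sum_add_distrib,
    Finset.sum_const, Finset.sum_ite_eq, if_pos (Finset.mem_univ x),
    Finset.card_univ, Fintype.card_fin, nsmul_eq_mul]
  ring

lemma sum_if_mul {m : ℕ} (x : Fin m) (A B : ℝ) (w : Fin m → ℝ) :
    ∑ c : Fin m, (if x = c then A else B) * w c
      = B * (∑ c : Fin m, w c) + (A - B) * w x := by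
  have : ∀ c : Fin m, (if x = c then A else B) * w c
      = B * w c + (if x = c then (A - B) * w c else 0) := by
    intro c; split <;> ring
  rw [Finset.sum_congr rfl fun c _ => this c, Finset.sum_add_distrib,
    ← Finset.mul_sum, Finset.sum_ite_eq, if_pos (Finset.mem_univ x)]

lemma K_mul (d : ℕ) (hd : 1 ≤ d) (r t : ℂ)
    (h1 : ‖r‖ ^ 2 + (((2 * d : ℕ) : ℝ) - 1) * ‖t‖ ^ 2 = 1)
    (h2 : (((2 * d : ℕ) : ℂ) - 2) * ((‖t‖ ^ 2 : ℝ) : ℂ) + conj r * t + r * conj t = 0) :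
    K d r t * ((2*d : ℕ) : ℝ) = 1 := by
  rw [K]
  set μ : ℂ := ((2 * d : ℕ) : ℂ) with hμ
  have hdpos : (0:ℝ) < 2 * d := by positivity
  have hs0 : Real.sqrt (2 * d) ≠ 0 := by positivity
  have hsC : ((Real.sqrt (2 * d) : ℝ) : ℂ) ≠ 0 := by exact_mod_cast hs0
  have hs2 : ((Real.sqrt (2 * d) : ℝ) : ℂ) ^ 2 = μ := by
    rw [← Complex.ofReal_pow, Real.sq_sqrt hdpos.le, hμ]
    push_cast; ring
  have e1 : r * conj r = ((‖r‖^2 : ℝ) : ℂ) := by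
    rw [Complex.mul_conj]; norm_cast
    rw [Complex.normSq_eq_norm_sq]
  have e2 : t * conj t = ((‖t‖^2 : ℝ) : ℂ) := by
    rw [Complex.mul_conj]; norm_cast
    rw [Complex.normSq_eq_norm_sq]
  have hvec : (r - t) / (Real.sqrt (2 * d) : ℂ) + (Real.sqrt (2 * d) : ℂ) * t
      = (r + (μ - 1) * t) / (Real.sqrt (2 * d) : ℂ) := by
    rw [div_add' _ _ _ hsC]
    congr 1
    linear_combination t * hs2
  have key : (r + (μ - 1) * t) * conj (r + (μ - 1) * t)
      = ((‖r‖^2 : ℝ) : ℂ) + (μ - 1) * ((‖t‖^2 : ℝ) : ℂ) := by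
    have hc : conj (r + (μ - 1) * t) = conj r + (μ - 1) * conj t := by
      have : conj μ = μ := by rw [hμ]; exact Complex.conj_natCast _
      simp [map_add, map_mul, map_sub, map_one, this]
    rw [hc]
    linear_combination e1 + (μ - 1)^2 * e2 + (μ - 1) * h2
  have hnorm : ‖r + (μ - 1) * t‖ ^ 2 = 1 := by
    have : ((‖r + (μ - 1) * t‖ ^ 2 : ℝ) : ℂ) = ((1 : ℝ) : ℂ) := by
      have hn : ((‖r + (μ - 1) * t‖ ^ 2 : ℝ) : ℂ)
          = (r + (μ - 1) * t) * conj (r + (μ - 1) * t) := by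
        rw [Complex.mul_conj]; norm_cast
        rw [Complex.normSq_eq_norm_sq]
      rw [hn, key, hμ]
      rw [← h1]
      push_cast; ring
    exact_mod_cast this
  rw [hvec, norm_div, div_pow, hnorm]
  rw [Complex.norm_real, Real.norm_eq_abs, abs_of_nonneg (Real.sqrt_nonneg _),
    Real.sq_sqrt hdpos.le]
  have : ((2*d : ℕ) : ℝ) = 2 * (d:ℝ) := by push_cast; ring
  rw [this]
  field_simp

lemma sum_Xi_sq (d : ℕ) (r t : ℂ)
    (h1 : ‖r‖ ^ 2 + (((2 * d : ℕ) : ℝ) - 1) * ‖t‖ ^ 2 = 1) (k : ℕ) :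
    ∑ a : Fin (k+1) → Fin (2*d), ‖Xi (2*d) (k+1) r t a‖^2 = ((2*d : ℕ) : ℝ) := by
  induction k with
  | zero =>
      have : ∀ a : Fin 1 → Fin (2*d), ‖Xi (2*d) 1 r t a‖^2 = 1 := by
        intro a; rw [Xi_one]; simp
      rw [Finset.sum_congr rfl fun a _ => this a, Finset.sum_const, Finset.card_univ]
      simp [Fintype.card_fun]
  | succ k ih =>
      rw [sum_snoc']
      have hpt : ∀ (b : Fin (k+1) → Fin (2*d)) (c : Fin (2*d)),
          ‖Xi (2*d) (k+2) r t (Fin.snoc b c)‖^2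
            = ‖Xi (2*d) (k+1) r t b‖^2 * (if b (Fin.last k) = c then ‖r‖^2 else ‖t‖^2) := by
        intro b c
        rw [Xi_snoc, norm_mul, mul_pow, norm_factor]
      calc ∑ b : Fin (k+1) → Fin (2*d), ∑ c : Fin (2*d), ‖Xi (2*d) (k+2) r t (Fin.snoc b c)‖^2
          = ∑ b : Fin (k+1) → Fin (2*d), ‖Xi (2*d) (k+1) r t b‖^2 := by
            refine Finset.sum_congr rfl fun b _ => ?_
            rw [Finset.sum_congr rfl fun c _ => hpt b c, ← Finset.mul_sum,
              sum_if_const, h1, mul_one]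
        _ = ((2*d : ℕ) : ℝ) := ih

/-- Eq. (57) of the paper: the recursion
`𝒟(n+1) = 𝒟(n) + 1 + 2K(|r|² - |t|²) R(n)` for the dispersion of the quantum walk with
random phase shifts with a unitary generalized Grover coin. -/
theorem dispersion_recursion (d : ℕ) (hd : 1 ≤ d) (r t : ℂ)
    (h1 : ‖r‖ ^ 2 + (((2 * d : ℕ) : ℝ) - 1) * ‖t‖ ^ 2 = 1)
    (h2 : (((2 * d : ℕ) : ℂ) - 2) * ((‖t‖ ^ 2 : ℝ) : ℂ) + conj r * t + r * conj t = 0)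
    (n : ℕ) (hn : 1 ≤ n) :
    Dsp d r t (n + 1)
      = Dsp d r t n + 1 + 2 * K d r t * (‖r‖ ^ 2 - ‖t‖ ^ 2) * Rsum d r t n := by
  obtain ⟨k, rfl⟩ : ∃ k, n = k + 1 := ⟨n - 1, by omega⟩
  have hKm := K_mul d hd r t h1 h2
  have hsum : ∀ (b : Fin (k+1) → Fin (2*d)) (c : Fin (2*d)),
      ∑ j : Fin (k+2), eR d ((Fin.snoc b c : Fin (k+2) → Fin (2*d)) j)
        = (∑ j : Fin (k+1), eR d (b j)) + eR d c := by
    intro b c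
    rw [Fin.sum_univ_castSucc]
    simp [Fin.snoc_castSucc, Fin.snoc_last]
  have step : ∀ b : Fin (k+1) → Fin (2*d),
      ∑ c : Fin (2*d), ‖∑ j : Fin (k+2), eR d ((Fin.snoc b c : Fin (k+2) → Fin (2*d)) j)‖^2
          * ‖Xi (2*d) (k+2) r t (Fin.snoc b c)‖^2
        = ‖∑ j : Fin (k+1), eR d (b j)‖^2 * ‖Xi (2*d) (k+1) r t b‖^2
          + 2*(‖r‖^2 - ‖t‖^2) * (‖Xi (2*d) (k+1) r t b‖^2
              * ⟪∑ j : Fin (k+1), eR d (b j), eR d (b (Fin.last k))⟫)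
          + ‖Xi (2*d) (k+1) r t b‖^2 := by
    intro b
    set S := ∑ j : Fin (k+1), eR d (b j) with hS
    set X := ‖Xi (2*d) (k+1) r t b‖^2 with hX
    have e1 : ∀ c : Fin (2*d),
        ‖∑ j : Fin (k+2), eR d ((Fin.snoc b c : Fin (k+2) → Fin (2*d)) j)‖^2
            * ‖Xi (2*d) (k+2) r t (Fin.snoc b c)‖^2
          = (if b (Fin.last k) = c then ‖r‖^2 else ‖t‖^2)
              * ((‖S‖^2 + 1) * X + (2*X) * ⟪S, eR d c⟫) := by
      intro c
      rw [hsum b c, Xi_snoc, norm_mul, mul_pow, norm_factor, norm_add_sq_real,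
        norm_eR]
      ring
    rw [Finset.sum_congr rfl fun c _ => e1 c, sum_if_mul]
    have hw : ∑ c : Fin (2*d), ((‖S‖^2 + 1) * X + (2*X) * ⟪S, eR d c⟫)
        = ((2*d : ℕ) : ℝ) * ((‖S‖^2 + 1) * X) := by
      rw [Finset.sum_add_distrib, Finset.sum_const, ← Finset.mul_sum, ← inner_sum,
        sum_eR, inner_zero_right, mul_zero, add_zero, Finset.card_univ,
        Fintype.card_fin, nsmul_eq_mul]
    rw [hw]
    linear_combination ((‖S‖^2 + 1) * X) * h1
  have hR : Rsum d r t (k+1)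
      = ∑ b : Fin (k+1) → Fin (2*d), ‖Xi (2*d) (k+1) r t b‖^2
          * ⟪∑ j : Fin (k+1), eR d (b j), eR d (b (Fin.last k))⟫ := by
    rw [Rsum, dif_pos (Nat.succ_pos k)]
    rfl
  have main : ∑ a : Fin (k+2) → Fin (2*d),
        ‖∑ j : Fin (k+2), eR d (a j)‖^2 * ‖Xi (2*d) (k+2) r t a‖^2
      = (∑ b : Fin (k+1) → Fin (2*d),
          ‖∑ j : Fin (k+1), eR d (b j)‖^2 * ‖Xi (2*d) (k+1) r t b‖^2)
        + 2*(‖r‖^2 - ‖t‖^2) * Rsum d r t (k+1) + ((2*d : ℕ) : ℝ) := by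
    rw [sum_snoc', Finset.sum_congr rfl fun b _ => step b, Finset.sum_add_distrib,
      Finset.sum_add_distrib, sum_Xi_sq d r t h1 k, ← Finset.mul_sum, hR]
  have hD2 : Dsp d r t (k+1+1)
      = K d r t * ((∑ b : Fin (k+1) → Fin (2*d),
          ‖∑ j : Fin (k+1), eR d (b j)‖^2 * ‖Xi (2*d) (k+1) r t b‖^2)
        + 2*(‖r‖^2 - ‖t‖^2) * Rsum d r t (k+1) + ((2*d : ℕ) : ℝ)) := by
    rw [Dsp, main]
  rw [hD2, mul_add, mul_add, hKm,
    show K d r t * (∑ b : Fin (k+1) → Fin (2*d),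
      ‖∑ j : Fin (k+1), eR d (b j)‖^2 * ‖Xi (2*d) (k+1) r t b‖^2)
      = Dsp d r t (k+1) from rfl]
  ring
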